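/- Let k ⊆ L ⊆ K be purely inseparable extensions of characteristic p > 0 with K/k of finite exponent. If B_L and B_K are r-bases of L/k and K/k respectively, then |B_L| ≤ |B_K|. -/

import Mathlib

/-!
Common definitions: purely inseparable extension theory (r-bases, degree of
irrationality, relative perfect closure, modularity), following Fliouet,
"Extensions absolument lq-finies".
-/

open IntermediateField

noncomputable section

/-- `k(K^p)`: the intermediate field of `K/k` generated by the `p`-th powers of `K`. -/
def pClosure (k K : Type*) [Field k] [Field K] [Algebra k K] (p : ℕ) : IntermediateField k K :=
  adjoin k {x : K | ∃ y : K, y ^ p = x}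

/-- `k(K^{p^n})`. -/
def pnClosure (k K : Type*) [Field k] [Field K] [Algebra k K] (p n : ℕ) : IntermediateField k K :=
  adjoin k {x : K | ∃ y : K, y ^ p ^ n = x}

/-- `k(L^p)` for an intermediate field `L` of `Ω/k`. -/
def pClosureOf {k Ω : Type*} [Field k] [Field Ω] [Algebra k Ω] (p : ℕ)
    (L : IntermediateField k Ω) : IntermediateField k Ω :=
  adjoin k {x : Ω | ∃ y ∈ L, y ^ p = x}

/-- `B` is `r`-free over the intermediate field `L` (typically `L = k(K^p)`):
no `x ∈ B` belongs to `L(B \ {x})`. -/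
def RFreeOver {k K : Type*} [Field k] [Field K] [Algebra k K]
    (L : IntermediateField k K) (B : Set K) : Prop :=
  ∀ x ∈ B, x ∉ adjoin L (B \ {x})

/-- `B` is an `r`-basis of `K/k` : `K = k(K^p)(B)` and `B` is `r`-free over `k(K^p)`. -/
def RBasis (k K : Type*) [Field k] [Field K] [Algebra k K] (p : ℕ) (B : Set K) : Prop :=
  adjoin (pClosure k K p) B = ⊤ ∧ RFreeOver (pClosure k K p) B

/-- `B` is an `r`-basis of `L/F` where `F ≤ L` are intermediate fields of `Ω/k`:
`L = F(L^p)(B)` and no `x ∈ B` lies in `F(L^p)(B \ {x})`. -/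
def RBasisRel {k Ω : Type*} [Field k] [Field Ω] [Algebra k Ω] (p : ℕ)
    (F L : IntermediateField k Ω) (B : Set Ω) : Prop :=
  B ⊆ (L : Set Ω) ∧ F ⊔ pClosureOf p L ⊔ adjoin k B = L ∧
    ∀ x ∈ B, x ∉ F ⊔ pClosureOf p L ⊔ adjoin k (B \ {x})

/-- The degree of irrationality of a bounded-exponent extension:
the cardinality of an `r`-basis of `K/k`. -/
def diCard (k K : Type*) [Field k] [Field K] [Algebra k K] (p : ℕ) : Cardinal :=
  sInf {c : Cardinal | ∃ B : Set K, RBasis k K p B ∧ Cardinal.mk B = c}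

/-- `k^{p^{-n}} ∩ K = {x ∈ K | x^{p^n} ∈ k}`. -/
def expleq (k K : Type*) [Field k] [Field K] [Algebra k K] (p n : ℕ) : IntermediateField k K :=
  adjoin k {x : K | x ^ p ^ n ∈ (algebraMap k K).range}

/-- The degree of irrationality `di(K/k) = sup_n di(k^{p^{-n}} ∩ K / k)`. -/
def di (k K : Type*) [Field k] [Field K] [Algebra k K] (p : ℕ) : Cardinal :=
  ⨆ n : ℕ, diCard k (expleq k K p n) p

/-- The relative perfect closure `rp(K/k)`: the largest intermediate field `L`
with `k(L^p) = L`. -/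
def rp (k K : Type*) [Field k] [Field K] [Algebra k K] (p : ℕ) : IntermediateField k K :=
  sSup {L : IntermediateField k K | pClosureOf p L = L}

/-- `K/k` has unbounded exponent. -/
def UnboundedExp (k K : Type*) [Field k] [Field K] [Algebra k K] (p : ℕ) : Prop :=
  ∀ e : ℕ, ∃ x : K, x ^ p ^ e ∉ (algebraMap k K).range

/-- `K^{p^n}` as a subfield of `K`. -/
def pnPowers (K : Type*) [Field K] (p n : ℕ) : Subfield K :=
  Subfield.closure {x : K | ∃ y : K, y ^ p ^ n = x}

/-- `K/k` is modular: for each `n`, `K^{p^n}` and `k` are linearly disjoint over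
`K^{p^n} ∩ k`, i.e. every finite family of elements of `K^{p^n}` that is linearly
independent over `K^{p^n} ∩ k` remains linearly independent over `k`. -/
def Modular (k K : Type*) [Field k] [Field K] [Algebra k K] (p : ℕ) : Prop :=
  ∀ n : ℕ, ∀ s : Finset K, (↑s : Set K) ⊆ (pnPowers K p n : Set K) →
    LinearIndependent ↥(pnPowers K p n ⊓ (algebraMap k K).fieldRange)
      (fun x : s => (x : K)) →
    LinearIndependent ↥((algebraMap k K).fieldRange) (fun x : s => (x : K))

/-- The exponent `o(a, F)` of `a` over an intermediate field `F`:
the least `m` with `a^{p^m} ∈ F`. -/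
def expOf {k K : Type*} [Field k] [Field K] [Algebra k K] (p : ℕ)
    (F : IntermediateField k K) (a : K) : ℕ :=
  sInf {m : ℕ | a ^ p ^ m ∈ F}

/-- An intermediate field `L` of `K/k` is equiexponential of exponent `e` over `k`:
there is an `r`-basis `G` of `L/k` with `o(a, k(G \ {a})) = o(a, k) = e` for all `a ∈ G`. -/
def EquiExpOf {k K : Type*} [Field k] [Field K] [Algebra k K] (p : ℕ)
    (e : ℕ) (L : IntermediateField k K) : Prop :=
  ∃ G : Set K, RBasisRel p ⊥ L G ∧
    ∀ a ∈ G, expOf p (adjoin k (G \ {a})) a = e ∧ expOf p (⊥ : IntermediateField k K) a = e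

end


/-! ### Auxiliary lemmas for the proof -/

noncomputable section AuxProof

open Module Polynomial

namespace RBasisAux

variable {p : ℕ} [Fact p.Prime] {k K : Type*} [Field k] [Field K] [Algebra k K] [CharP K p]

theorem minpoly_pow_mem {E : Type*} [Field E] [Algebra E K] {x : K} {c : E}
    (hc : algebraMap E K c = x ^ p) (hx : x ∉ (algebraMap E K).range) :
    minpoly E x = X ^ p - C c := by
  have hp : p.Prime := Fact.out
  have hmonic : (X ^ p - C c : E[X]).Monic := monic_X_pow_sub_C _ hp.ne_zero
  have haev : (Polynomial.aeval x) (X ^ p - C c : E[X]) = 0 := by simp [hc, sub_eq_zero]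
  have hirr : Irreducible (X ^ p - C c : E[X]) := by
    refine X_pow_sub_C_irreducible_of_prime hp fun b hb => ?_
    refine hx ⟨b, frobenius_inj K p (a₁ := algebraMap E K b) (a₂ := x) ?_⟩
    simpa [frobenius_def, ← map_pow, hb, hc] using rfl
  exact (minpoly.eq_of_irreducible_of_monic hirr haev hmonic).symm

theorem isIntegral_of_pow_mem {E : Type*} [Field E] [Algebra E K] {x : K} {c : E}
    (hc : algebraMap E K c = x ^ p) : IsIntegral E x := by
  have hp : p.Prime := Fact.out
  exact ⟨X ^ p - C c, monic_X_pow_sub_C _ hp.ne_zero, by simp [hc, sub_eq_zero]⟩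

theorem finrank_sup_adjoin_le [FiniteDimensional k K] (E : IntermediateField k K) {x : K}
    (hxp : x ^ p ∈ E) :
    finrank k ↥(E ⊔ adjoin k {x}) ≤ p * finrank k ↥E := by
  have hc : algebraMap ↥E K ⟨x ^ p, hxp⟩ = x ^ p := rfl
  have hint : IsIntegral ↥E x := isIntegral_of_pow_mem hc
  have h1 : finrank k ↥(E ⊔ adjoin k {x}) = finrank k ↥E * finrank ↥E ↥(adjoin ↥E {x}) := by
    rw [← restrictScalars_adjoin_eq_sup]
    exact (Module.finrank_mul_finrank k ↥E ↥(adjoin ↥E {x})).symm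
  rw [h1, mul_comm]
  have h2 : finrank ↥E ↥(adjoin ↥E {x}) = (minpoly ↥E x).natDegree :=
    IntermediateField.adjoin.finrank hint
  have h3 : (minpoly ↥E x).natDegree ≤ p := by
    have hdvd : minpoly ↥E x ∣ X ^ p - C (⟨x ^ p, hxp⟩ : ↥E) :=
      minpoly.dvd _ _ (by simp [hc, sub_eq_zero])
    have hne := (monic_X_pow_sub_C (⟨x ^ p, hxp⟩ : ↥E) (Fact.out : p.Prime).ne_zero).ne_zero
    simpa [natDegree_X_pow_sub_C] using Polynomial.natDegree_le_of_dvd hdvd hne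
  exact Nat.mul_le_mul_right _ (h2 ▸ h3)

theorem finrank_sup_adjoin_eq [FiniteDimensional k K] (E : IntermediateField k K) {x : K}
    (hxp : x ^ p ∈ E) (hx : x ∉ E) :
    finrank k ↥(E ⊔ adjoin k {x}) = p * finrank k ↥E := by
  have hc : algebraMap ↥E K ⟨x ^ p, hxp⟩ = x ^ p := rfl
  have hx' : x ∉ (algebraMap ↥E K).range := by
    rintro ⟨y, rfl⟩; exact hx y.2
  have h1 : finrank k ↥(E ⊔ adjoin k {x}) = finrank k ↥E * finrank ↥E ↥(adjoin ↥E {x}) := by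
    rw [← restrictScalars_adjoin_eq_sup]
    exact (Module.finrank_mul_finrank k ↥E ↥(adjoin ↥E {x})).symm
  rw [h1, mul_comm]
  congr 1
  rw [IntermediateField.adjoin.finrank (isIntegral_of_pow_mem hc), minpoly_pow_mem hc hx',
    natDegree_X_pow_sub_C]

theorem mem_pClosureOf_of_mem {L : IntermediateField k K} {y : K} (hy : y ∈ L) :
    y ^ p ∈ pClosureOf p L :=
  subset_adjoin _ _ ⟨y, hy, rfl⟩

theorem pClosureOf_mono {L M : IntermediateField k K} (h : L ≤ M) :
    pClosureOf p L ≤ pClosureOf p M := by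
  apply adjoin.mono
  rintro x ⟨y, hy, rfl⟩
  exact ⟨y, h hy, rfl⟩

/-- The preimage of an intermediate field under Frobenius. -/
def frobComap (T : IntermediateField k K) : IntermediateField k K :=
  Subfield.toIntermediateField (T.toSubfield.comap (frobenius K p)) (fun c => by
    show frobenius K p (algebraMap k K c) ∈ T
    rw [frobenius_def, ← map_pow]
    exact T.algebraMap_mem _)

theorem mem_frobComap {T : IntermediateField k K} {x : K} :
    x ∈ (frobComap (p := p) T) ↔ x ^ p ∈ T := Iff.rfl

theorem pClosureOf_sup_adjoin (L : IntermediateField k K) (a : K) :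
    pClosureOf p (L ⊔ adjoin k {a}) = pClosureOf p L ⊔ adjoin k {a ^ p} := by
  apply le_antisymm
  · apply adjoin_le_iff.2
    rintro x ⟨y, hy, rfl⟩
    suffices h : L ⊔ adjoin k {a} ≤ frobComap (p := p) (pClosureOf p L ⊔ adjoin k {a ^ p}) from
      h hy
    apply sup_le
    · intro z hz
      show z ^ p ∈ pClosureOf p L ⊔ adjoin k {a ^ p}
      exact (le_sup_left : pClosureOf p L ≤ _) (mem_pClosureOf_of_mem hz)
    · apply adjoin_le_iff.2
      apply Set.singleton_subset_iff.2
      show a ^ p ∈ pClosureOf p L ⊔ adjoin k {a ^ p}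
      exact (le_sup_right : adjoin k {a ^ p} ≤ _) (mem_adjoin_simple_self k (a ^ p))
  · apply sup_le
    · exact pClosureOf_mono le_sup_left
    · apply adjoin_le_iff.2
      apply Set.singleton_subset_iff.2
      exact mem_pClosureOf_of_mem ((le_sup_right : adjoin k {a} ≤ _) (mem_adjoin_simple_self k a))

theorem finrank_mono' [FiniteDimensional k K] {L M : IntermediateField k K} (h : L ≤ M) :
    finrank k ↥L ≤ finrank k ↥M :=
  Submodule.finrank_mono (show Subalgebra.toSubmodule L.toSubalgebra ≤
    Subalgebra.toSubmodule M.toSubalgebra from h)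

theorem lemM [FiniteDimensional k K] {e : ℕ}
    (he : ∀ x : K, x ^ p ^ e ∈ (algebraMap k K).range) :
    ∀ (n : ℕ) (L M : IntermediateField k K), L ≤ M → finrank k ↥M - finrank k ↥L ≤ n →
      finrank k ↥L * finrank k ↥(pClosureOf p M) ≤ finrank k ↥M * finrank k ↥(pClosureOf p L) := by
  classical
  have hp : p.Prime := Fact.out
  intro n
  induction n with
  | zero =>
    intro L M hLM hn
    have hle : finrank k ↥L ≤ finrank k ↥M := finrank_mono' hLM
    have : L = M := IntermediateField.eq_of_le_of_finrank_le hLM (by omega)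
    subst this; rfl
  | succ n ih =>
    intro L M hLM hn
    by_cases hEq : L = M
    · subst hEq; rfl
    · obtain ⟨x, hxM, hxL⟩ := SetLike.exists_of_lt (lt_of_le_of_ne hLM hEq)
      have hex : ∃ m : ℕ, x ^ p ^ m ∈ L := by
        obtain ⟨c, hc⟩ := he x
        exact ⟨e, by rw [← hc]; exact L.algebraMap_mem c⟩
      set m := Nat.find hex with hm
      have hmem : x ^ p ^ m ∈ L := Nat.find_spec hex
      have hm1 : 1 ≤ m := by
        rcases Nat.eq_zero_or_pos m with h0 | h1
        · exact absurd (by simpa [h0] using hmem) hxL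
        · exact h1
      set a := x ^ p ^ (m - 1) with ha
      have hap : a ^ p ∈ L := by
        rw [ha, ← pow_mul, ← pow_succ]
        have hsucc : m - 1 + 1 = m := by omega
        rw [hsucc]; exact hmem
      have haL : a ∉ L := Nat.find_min hex (by omega)
      have haM : a ∈ M := pow_mem hxM _
      set L' := L ⊔ adjoin k {a} with hL'
      have hL'M : L' ≤ M := sup_le hLM (adjoin_le_iff.2 (Set.singleton_subset_iff.2 haM))
      have hDL' : finrank k ↥L' = p * finrank k ↥L := finrank_sup_adjoin_eq L hap haL
      have hpcl : pClosureOf p L' = pClosureOf p L ⊔ adjoin k {a ^ p} :=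
        pClosureOf_sup_adjoin L a
      have hpcl_le : finrank k ↥(pClosureOf p L') ≤ p * finrank k ↥(pClosureOf p L) := by
        rw [hpcl]
        exact finrank_sup_adjoin_le _ (mem_pClosureOf_of_mem hap)
      have hposL : 0 < finrank k ↥L := finrank_pos
      have hmeas : finrank k ↥M - finrank k ↥L' ≤ n := by
        have h2 : 2 ≤ p := hp.two_le
        have hstep : finrank k ↥L + 1 ≤ finrank k ↥L' := by nlinarith [hDL']
        have := finrank_mono' (k := k) hL'M
        omega
      have hIH := ih L' M hL'M hmeas
      have key : p * (finrank k ↥L * finrank k ↥(pClosureOf p M)) ≤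
          p * (finrank k ↥M * finrank k ↥(pClosureOf p L)) := by
        calc p * (finrank k ↥L * finrank k ↥(pClosureOf p M))
            = finrank k ↥L' * finrank k ↥(pClosureOf p M) := by rw [hDL']; ring
          _ ≤ finrank k ↥M * finrank k ↥(pClosureOf p L') := hIH
          _ ≤ finrank k ↥M * (p * finrank k ↥(pClosureOf p L)) :=
              Nat.mul_le_mul_left _ hpcl_le
          _ = p * (finrank k ↥M * finrank k ↥(pClosureOf p L)) := by ring
      exact Nat.le_of_mul_le_mul_left key hp.pos

theorem adjoin_eq_top_of_rGen {B : Set K} {e : ℕ}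
    (hgen : adjoin ↥(pClosure k K p) B = ⊤)
    (he : ∀ x : K, x ^ p ^ e ∈ (algebraMap k K).range) :
    adjoin k B = ⊤ := by
  haveI : ExpChar K p := ExpChar.prime Fact.out
  set pow : ℕ → Set K := fun n => {x : K | ∃ y : K, y ^ p ^ n = x} with hpow
  have hC1 : (⊤ : IntermediateField k K) = adjoin k (B ∪ pow 1) := by
    have h := congrArg (restrictScalars k) hgen
    rw [restrictScalars_top, restrictScalars_adjoin_eq_sup] at h
    rw [← h, pClosure, ← adjoin_union, Set.union_comm]
    congr 2
    ext x
    simp [hpow, pow_one]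
  have hstep : ∀ n : ℕ, pow n ⊆ ↑(adjoin k (B ∪ pow (n + 1))) := by
    intro n z hz
    obtain ⟨y, rfl⟩ := hz
    set T := adjoin k (B ∪ pow (n + 1)) with hT
    have hy : y ∈ (adjoin k (B ∪ pow 1)).toSubfield := by
      rw [← hC1]; trivial
    rw [adjoin_toSubfield] at hy
    have hmap : (iterateFrobenius K p n) y ∈
        (Subfield.closure (Set.range (algebraMap k K) ∪ (B ∪ pow 1))).map
          (iterateFrobenius K p n) :=
      Subfield.mem_map.2 ⟨y, hy, rfl⟩
    rw [RingHom.map_field_closure] at hmap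
    have hle : Subfield.closure ((iterateFrobenius K p n) ''
        (Set.range (algebraMap k K) ∪ (B ∪ pow 1))) ≤ T.toSubfield := by
      apply Subfield.closure_le.2
      rintro w ⟨u, hu, rfl⟩
      rcases hu with ⟨c, rfl⟩ | hu | ⟨y', rfl⟩
      · show (algebraMap k K c) ^ p ^ n ∈ T
        rw [← map_pow]
        exact T.algebraMap_mem _
      · show u ^ p ^ n ∈ T
        exact pow_mem (subset_adjoin _ _ (Set.mem_union_left _ hu)) _
      · show (y' ^ p ^ 1) ^ p ^ n ∈ T
        rw [← pow_mul, ← pow_add]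
        exact subset_adjoin _ _ (Set.mem_union_right _ ⟨y', by rw [add_comm]⟩)
    have hfin := hle hmap
    rw [iterateFrobenius_def] at hfin
    exact hfin
  have hCn : ∀ n : ℕ, (⊤ : IntermediateField k K) = adjoin k (B ∪ pow n) := by
    intro n
    induction n with
    | zero =>
      apply le_antisymm _ le_top
      intro x _
      exact subset_adjoin _ _ (Set.mem_union_right _ ⟨x, by simp⟩)
    | succ n ihn =>
      have hle : adjoin k (B ∪ pow n) ≤ adjoin k (B ∪ pow (n + 1)) :=
        adjoin_le_iff.2 (Set.union_subset
          (fun b hb => subset_adjoin _ _ (Set.mem_union_left _ hb)) (hstep n))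
      exact (top_le_iff.1 (ihn.le.trans hle)).symm
  have hfin : adjoin k (B ∪ pow e) ≤ adjoin k B := by
    apply adjoin_le_iff.2
    apply Set.union_subset
    · exact subset_adjoin _ _
    · rintro z ⟨y, rfl⟩
      obtain ⟨c, hc⟩ := he y
      rw [← hc]
      exact (adjoin k B).algebraMap_mem c
  exact top_le_iff.1 ((hCn e).le.trans hfin)

theorem lemI {B : Set K}
    (hfree : ∀ x ∈ B, x ∉ adjoin ↥(pClosure k K p) (B \ {x})) :
    LinearIndependent k (fun b : B => (b : K)) := by
  set F := pClosure k K p with hF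
  have hind : LinearIndependent ↥F (fun b : B => (b : K)) := by
    rw [linearIndependent_iff_notMem_span]
    intro i hin
    apply hfree i i.2
    have hle : Submodule.span ↥F ((fun b : B => (b : K)) '' (Set.univ \ {i})) ≤
        Subalgebra.toSubmodule (adjoin ↥F (B \ {(i : K)})).toSubalgebra := by
      apply Submodule.span_le.2
      rintro _ ⟨j, hj, rfl⟩
      refine subset_adjoin _ _ ⟨j.2, ?_⟩
      intro hji
      exact hj.2 (by simpa [Subtype.ext_iff] using hji)
    exact hle hin
  apply hind.restrict_scalars
  intro a b hab
  have h2 : algebraMap k K a = algebraMap k K b := by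
    simpa [Algebra.smul_def] using congrArg (algebraMap ↥F K) hab
  exact (algebraMap k K).injective h2

theorem lemR [FiniteDimensional k K] {B : Set K} (hB : B.Finite)
    (hgen : adjoin ↥(pClosure k K p) B = ⊤)
    (hfree : ∀ x ∈ B, x ∉ adjoin ↥(pClosure k K p) (B \ {x})) :
    finrank k K = p ^ hB.toFinset.card * finrank k ↥(pClosure k K p) := by
  classical
  set F := pClosure k K p with hF
  have key : ∀ s : Finset K, ↑s ⊆ B →
      finrank k ↥(F ⊔ adjoin k (s : Set K)) = p ^ s.card * finrank k ↥F := by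
    intro s
    induction s using Finset.induction_on with
    | empty =>
      intro _
      rw [Finset.coe_empty, adjoin_empty, sup_bot_eq, Finset.card_empty, pow_zero, one_mul]
    | @insert x s hx ih =>
      intro hsub
      have hxB : x ∈ B := hsub (Finset.mem_insert_self x s)
      have hsB : ↑s ⊆ B := fun y hy => hsub (Finset.mem_insert_of_mem hy)
      have hxpF : x ^ p ∈ F := subset_adjoin _ _ ⟨x, rfl⟩
      set E := F ⊔ adjoin k (s : Set K) with hE
      have hxE : x ∉ E := by
        intro hmem
        apply hfree x hxB
        have h1 : E = IntermediateField.restrictScalars k (adjoin ↥F (s : Set K)) := by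
          rw [restrictScalars_adjoin_eq_sup]
        have h2 : adjoin ↥F (s : Set K) ≤ adjoin ↥F (B \ {x}) := by
          apply adjoin.mono
          intro y hy
          refine ⟨hsB hy, fun h => hx ?_⟩
          have hyx : y = x := h
          rwa [hyx] at hy
        rw [h1] at hmem
        exact h2 hmem
      have hcoe : F ⊔ adjoin k ((insert x s : Finset K) : Set K) = E ⊔ adjoin k {x} := by
        rw [Finset.coe_insert, Set.insert_eq, adjoin_union, hE, sup_assoc,
          sup_comm (adjoin k {x})]
      rw [hcoe, finrank_sup_adjoin_eq E ((le_sup_left : F ≤ E) hxpF) hxE, ih hsB,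
        Finset.card_insert_of_notMem hx, pow_succ]
      ring
  have htop : F ⊔ adjoin k B = ⊤ := by
    have h := congrArg (restrictScalars k) hgen
    rwa [restrictScalars_top, restrictScalars_adjoin_eq_sup] at h
  have hfin := key hB.toFinset (by simp)
  rw [hB.coe_toFinset, htop, finrank_top'] at hfin
  exact hfin

end RBasisAux

end AuxProof

/-- For `k ⊆ L ⊆ K` purely inseparable with `K/k` of finite exponent,
an `r`-basis of `L/k` has cardinality at most that of an `r`-basis of `K/k`. -/
theorem card_rBasis_le_of_le
    (p : ℕ) [Fact p.Prime] (k K : Type*) [Field k] [Field K] [Algebra k K] [CharP k p]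
    [IsPurelyInseparable k K]
    (e : ℕ) (he : ∀ x : K, x ^ p ^ e ∈ (algebraMap k K).range)
    (L : IntermediateField k K) (B_L : Set ↥L) (B_K : Set K)
    (hL : RBasis k ↥L p B_L) (hK : RBasis k K p B_K) :
    Cardinal.mk B_L ≤ Cardinal.mk B_K := by
  classical
  have hp : p.Prime := Fact.out
  haveI hKp : CharP K p := charP_of_injective_algebraMap (algebraMap k K).injective p
  haveI hLp : CharP ↥L p := charP_of_injective_algebraMap (algebraMap k ↥L).injective p
  obtain ⟨hKgen, hKfree⟩ := hK
  obtain ⟨hLgen, hLfree⟩ := hL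
  have heL : ∀ x : ↥L, x ^ p ^ e ∈ (algebraMap k ↥L).range := by
    intro x
    obtain ⟨c, hc⟩ := he ↑x
    refine ⟨c, Subtype.ext ?_⟩
    show algebraMap k K c = ((x ^ p ^ e : ↥L) : K)
    rw [hc]
    norm_cast
  have hKtop : adjoin k B_K = ⊤ := RBasisAux.adjoin_eq_top_of_rGen hKgen he
  have hindL : LinearIndependent k (fun b : B_L => (b : ↥L)) := RBasisAux.lemI hLfree
  -- the bridge between `pClosure k ↥L p` and `pClosureOf p L`
  have hmapeq : (pClosure k ↥L p).map L.val = pClosureOf p L := by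
    unfold pClosure pClosureOf
    rw [adjoin_map]
    congr 1
    ext x
    constructor
    · rintro ⟨x', ⟨y', rfl⟩, rfl⟩
      refine ⟨↑y', y'.2, ?_⟩
      norm_cast
    · rintro ⟨y, hyL, rfl⟩
      refine ⟨(⟨y, hyL⟩ : ↥L) ^ p, ⟨⟨y, hyL⟩, rfl⟩, ?_⟩
      norm_cast
  have hbr : Module.finrank k ↥(pClosure k ↥L p) = Module.finrank k ↥(pClosureOf p L) := by
    rw [← hmapeq]
    exact (IntermediateField.equivMap (pClosure k ↥L p) L.val).toLinearEquiv.finrank_eq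
  have hptop : pClosureOf p (⊤ : IntermediateField k K) = pClosure k K p := by
    unfold pClosureOf pClosure
    congr 1
    ext x
    simp
  by_cases hfin : B_K.Finite
  · -- finite case
    haveI : Finite ↥B_K := hfin.to_subtype
    haveI hfdtop : FiniteDimensional k ↥(adjoin k B_K) :=
      IntermediateField.finiteDimensional_adjoin
        (fun x _ => IsPurelyInseparable.isIntegral' k x)
    haveI : FiniteDimensional k K := by
      rw [hKtop] at hfdtop
      exact Module.Finite.equiv IntermediateField.topEquiv.toLinearEquiv
    haveI : FiniteDimensional k ↥L := inferInstance
    have hBLfin : B_L.Finite := hindL.setFinite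
    have hRL := RBasisAux.lemR (p := p) (k := k) (K := ↥L) hBLfin hLgen hLfree
    have hRK := RBasisAux.lemR (p := p) (k := k) (K := K) hfin hKgen hKfree
    have hMono := RBasisAux.lemM (p := p) (k := k) (K := K) he
      (Module.finrank k ↥(⊤ : IntermediateField k K) - Module.finrank k ↥L) L ⊤ le_top le_rfl
    rw [hptop, IntermediateField.finrank_top'] at hMono
    rw [← hbr] at hMono
    rw [hRL, hRK] at hMono
    set DL := Module.finrank k ↥(pClosure k ↥L p) with hDL
    set DK := Module.finrank k ↥(pClosure k K p) with hDK
    have hDLpos : 0 < DL := Module.finrank_pos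
    have hDKpos : 0 < DK := Module.finrank_pos
    have hcard : hBLfin.toFinset.card ≤ hfin.toFinset.card := by
      have h1 : p ^ hBLfin.toFinset.card * (DL * DK) ≤
          p ^ hfin.toFinset.card * (DL * DK) := by
        calc p ^ hBLfin.toFinset.card * (DL * DK)
            = p ^ hBLfin.toFinset.card * DL * DK := by ring
          _ ≤ p ^ hfin.toFinset.card * DK * DL := hMono
          _ = p ^ hfin.toFinset.card * (DL * DK) := by ring
      have h2 : p ^ hBLfin.toFinset.card ≤ p ^ hfin.toFinset.card :=
        Nat.le_of_mul_le_mul_right h1 (Nat.mul_pos hDLpos hDKpos)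
      exact (Nat.pow_le_pow_iff_right hp.one_lt).1 h2
    have e1 : Cardinal.mk ↥B_L = (hBLfin.toFinset.card : Cardinal) :=
      (Cardinal.mk_congr (Equiv.setCongr hBLfin.coe_toFinset.symm)).trans
        (Cardinal.mk_coe_finset)
    have e2 : Cardinal.mk ↥B_K = (hfin.toFinset.card : Cardinal) :=
      (Cardinal.mk_congr (Equiv.setCongr hfin.coe_toFinset.symm)).trans
        (Cardinal.mk_coe_finset)
    rw [e1, e2]
    exact_mod_cast hcard
  · -- infinite case
    haveI hinfB : Infinite ↥B_K := Set.infinite_coe_iff.2 hfin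
    have halg : ∀ x ∈ B_K, IsAlgebraic k x :=
      fun x _ => (IsPurelyInseparable.isIntegral' k x).isAlgebraic
    have hsubalg : Algebra.adjoin k B_K = ⊤ := by
      have h := IntermediateField.adjoin_toSubalgebra_of_isAlgebraic halg
      rw [hKtop] at h
      rw [← h]
      rfl
    have hspan : Submodule.span k ((Submonoid.closure B_K : Submonoid K) : Set K) = ⊤ := by
      have h := Algebra.adjoin_eq_span (R := k) (s := B_K)
      rw [hsubalg] at h
      rw [← h]
      rfl
    have h1 : Module.rank k K ≤ Cardinal.mk ↥((Submonoid.closure B_K : Submonoid K) : Set K) := by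
      have h := rank_span_le (R := k) (M := K) ((Submonoid.closure B_K : Submonoid K) : Set K)
      rw [hspan] at h
      rwa [rank_top] at h
    set f : List ↥B_K → K := fun l => (l.map (fun b : ↥B_K => (b : K))).prod with hf
    have hsub : ((Submonoid.closure B_K : Submonoid K) : Set K) ⊆ Set.range f := by
      intro x hx
      obtain ⟨l, hl, rfl⟩ := Submonoid.exists_list_of_mem_closure hx
      refine ⟨l.pmap (fun y hy => (⟨y, hy⟩ : ↥B_K)) hl, ?_⟩
      show ((l.pmap (fun y hy => (⟨y, hy⟩ : ↥B_K)) hl).map (fun b : ↥B_K => (b : K))).prod = l.prod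
      congr 1
      rw [List.map_pmap]
      simp
    have h2 : Cardinal.mk ↥((Submonoid.closure B_K : Submonoid K) : Set K) ≤
        Cardinal.mk ↥B_K := by
      calc Cardinal.mk ↥((Submonoid.closure B_K : Submonoid K) : Set K)
          ≤ Cardinal.mk ↥(Set.range f) := Cardinal.mk_le_mk_of_subset hsub
        _ ≤ Cardinal.mk (List ↥B_K) := Cardinal.mk_range_le
        _ = Cardinal.mk ↥B_K := Cardinal.mk_list_eq_mk ↥B_K
    have h3 : Cardinal.mk ↥B_L ≤ Module.rank k ↥L := hindL.cardinal_le_rank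
    have h4 : Module.rank k ↥L ≤ Module.rank k K :=
      Submodule.rank_le (Subalgebra.toSubmodule L.toSubalgebra)
    exact h3.trans (h4.trans (h1.trans h2))
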